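/- Let ρ1 and ρ2 be n×n density matrices and let d : ℝ^n → ℝ be a Schur-convex function. Then for every unital quantum channel Φ one has d(λ(ρ1 − Φ(ρ2))) ≤ d(λ(Λ↓(ρ1) − Λ↑(ρ2))), and there exists a mixed unitary channel (in particular a unital channel) Φ for which equality holds; thus the maximum of d(λ(ρ1 − Φ(ρ2))) over unital quantum channels Φ, and also over mixed unitary channels Φ, equals d(λ(Λ↓(ρ1) − Λ↑(ρ2))). -/

import Mathlib

open Matrix
open scoped ComplexOrder Classical

/-- The vector of a tuple's entries sorted in decreasing (nonincreasing) order. -/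
noncomputable def sortDec {n : ℕ} (x : Fin n → ℝ) : Fin n → ℝ :=
  fun i => x (Tuple.sort x i.rev)

/-- The eigenvalues of a Hermitian matrix arranged in decreasing order,
`λ(A)`; junk value `0` if `A` is not Hermitian. -/
noncomputable def eigsDec {n : ℕ} (A : Matrix (Fin n) (Fin n) ℂ) : Fin n → ℝ :=
  if hA : A.IsHermitian then sortDec hA.eigenvalues else 0

/-- The eigenvalues of a Hermitian matrix arranged in increasing order. -/
noncomputable def eigsInc {n : ℕ} (A : Matrix (Fin n) (Fin n) ℂ) : Fin n → ℝ :=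
  fun i => eigsDec A i.rev

/-- `Λ↓(A)`: the diagonal matrix of the eigenvalues of `A` in decreasing order. -/
noncomputable def LambdaDown {n : ℕ} (A : Matrix (Fin n) (Fin n) ℂ) :
    Matrix (Fin n) (Fin n) ℂ :=
  Matrix.diagonal fun i => (eigsDec A i : ℂ)

/-- `Λ↑(A)`: the diagonal matrix of the eigenvalues of `A` in increasing order. -/
noncomputable def LambdaUp {n : ℕ} (A : Matrix (Fin n) (Fin n) ℂ) :
    Matrix (Fin n) (Fin n) ℂ :=
  Matrix.diagonal fun i => (eigsInc A i : ℂ)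

/-- `x ≺ y`: the sum of the `k` largest entries of `x` is at most that of `y`
for every `k`, with equality of the total sums. -/
def Majorizes {n : ℕ} (x y : Fin n → ℝ) : Prop :=
  (∀ k : ℕ, ∑ i ∈ Finset.univ.filter (fun i : Fin n => (i : ℕ) < k), sortDec x i ≤
      ∑ i ∈ Finset.univ.filter (fun i : Fin n => (i : ℕ) < k), sortDec y i) ∧
    (∑ i, x i) = ∑ i, y i

/-- A function `d` is Schur-convex if `x ≺ y` implies `d x ≤ d y`. -/
def SchurConvex {n : ℕ} (d : (Fin n → ℝ) → ℝ) : Prop :=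
  ∀ x y : Fin n → ℝ, Majorizes x y → d x ≤ d y

/-- A density matrix: positive semidefinite with trace one. -/
def IsDensityMatrix {n : ℕ} (ρ : Matrix (Fin n) (Fin n) ℂ) : Prop :=
  ρ.PosSemidef ∧ ρ.trace = 1

/-- A quantum channel: completely positive trace preserving map in Kraus form. -/
def IsQuantumChannel {n : ℕ}
    (Φ : Matrix (Fin n) (Fin n) ℂ → Matrix (Fin n) (Fin n) ℂ) : Prop :=
  ∃ (r : ℕ) (F : Fin r → Matrix (Fin n) (Fin n) ℂ),
    (∑ j, (F j)ᴴ * F j) = 1 ∧ ∀ X, Φ X = ∑ j, F j * X * (F j)ᴴ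

/-- A unital quantum channel. -/
def IsUnitalChannel {n : ℕ}
    (Φ : Matrix (Fin n) (Fin n) ℂ → Matrix (Fin n) (Fin n) ℂ) : Prop :=
  IsQuantumChannel Φ ∧ Φ 1 = 1

/-- A mixed unitary channel: a convex combination of unitary conjugations. -/
def IsMixedUnitaryChannel {n : ℕ}
    (Φ : Matrix (Fin n) (Fin n) ℂ → Matrix (Fin n) (Fin n) ℂ) : Prop :=
  ∃ (r : ℕ) (t : Fin r → ℝ) (U : Fin r → Matrix (Fin n) (Fin n) ℂ),
    (∀ j, 0 ≤ t j) ∧ (∑ j, t j) = 1 ∧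
      (∀ j, U j ∈ Matrix.unitaryGroup (Fin n) ℂ) ∧
      ∀ X, Φ X = ∑ j, (t j : ℂ) • (U j * X * (U j)ᴴ)

/-- Functional calculus: `f(A)` for a Hermitian matrix `A`, via the spectral theorem;
junk value `0` if `A` is not Hermitian. -/
noncomputable def matFun {n : ℕ} (f : ℝ → ℝ) (A : Matrix (Fin n) (Fin n) ℂ) :
    Matrix (Fin n) (Fin n) ℂ :=
  if hA : A.IsHermitian then
    (hA.eigenvectorUnitary : Matrix (Fin n) (Fin n) ℂ) *
      Matrix.diagonal (fun i => (f (hA.eigenvalues i) : ℂ)) *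
      (hA.eigenvectorUnitary : Matrix (Fin n) (Fin n) ℂ)ᴴ
  else 0

/-- The square root of a positive semidefinite matrix, as `Matrix.PosSemidef.sqrt` was defined
in the older Mathlib (removed since). -/
noncomputable def psdSqrt {n : ℕ} {A : Matrix (Fin n) (Fin n) ℂ} (hA : A.PosSemidef) :
    Matrix (Fin n) (Fin n) ℂ :=
  (hA.1.eigenvectorUnitary : Matrix (Fin n) (Fin n) ℂ) *
    Matrix.diagonal ((↑) ∘ Real.sqrt ∘ hA.1.eigenvalues) *
    (star hA.1.eigenvectorUnitary : Matrix (Fin n) (Fin n) ℂ)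

/-- `|A| = (AᴴA)^{1/2}`. -/
noncomputable def matAbs {n : ℕ} (A : Matrix (Fin n) (Fin n) ℂ) :
    Matrix (Fin n) (Fin n) ℂ :=
  psdSqrt (Matrix.posSemidef_conjTranspose_mul_self A)

/-- `tr|A|`, the sum of the singular values of `A`. -/
noncomputable def traceAbs {n : ℕ} (A : Matrix (Fin n) (Fin n) ℂ) : ℝ :=
  ((matAbs A).trace).re

/-- The singular values of `A` in decreasing order. -/
noncomputable def singVals {n : ℕ} (A : Matrix (Fin n) (Fin n) ℂ) : Fin n → ℝ :=
  eigsDec (matAbs A)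

/-- The positive semidefinite square root of a PSD matrix (junk value `0` otherwise). -/
noncomputable def matSqrt {n : ℕ} (A : Matrix (Fin n) (Fin n) ℂ) :
    Matrix (Fin n) (Fin n) ℂ :=
  if hA : A.PosSemidef then psdSqrt hA else 0

/-- The fidelity `F(ρ,σ) = tr|ρ^{1/2} σ^{1/2}|`. -/
noncomputable def fidelity {n : ℕ} (ρ σ : Matrix (Fin n) (Fin n) ℂ) : ℝ :=
  traceAbs (matSqrt ρ * matSqrt σ)

/-- The relative entropy `S(ρ‖σ) = tr(ρ (log ρ - log σ))`. -/
noncomputable def relEntropy {n : ℕ} (ρ σ : Matrix (Fin n) (Fin n) ℂ) : ℝ :=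
  ((ρ * (matFun Real.log ρ - matFun Real.log σ)).trace).re

/-- The (real) trace of a matrix whose trace is real. -/
noncomputable def trR {n : ℕ} (A : Matrix (Fin n) (Fin n) ℂ) : ℝ := A.trace.re


section Aux

variable {n : ℕ}

noncomputable def psum (k : ℕ) (x : Fin n → ℝ) : ℝ :=
  ∑ i ∈ Finset.univ.filter (fun i : Fin n => (i : ℕ) < k), x i

lemma psum_eq (k : ℕ) (x : Fin n → ℝ) :
    psum k x = ∑ i : Fin n, if (i : ℕ) < k then x i else 0 :=
  Finset.sum_filter _ _

lemma antitone_sortDec (x : Fin n → ℝ) : Antitone (sortDec x) := by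
  intro i j hij
  exact Tuple.monotone_sort x (Fin.rev_le_rev.mpr hij)

lemma sortDec_of_antitone {x : Fin n → ℝ} (hx : Antitone x) : sortDec x = x := by
  have hmono : Monotone (x ∘ (Fin.revPerm : Equiv.Perm (Fin n))) := by
    intro i j hij
    exact hx (Fin.rev_le_rev.mpr hij)
  have h := Tuple.comp_sort_eq_comp_iff_monotone.mpr hmono
  funext i
  have := congrFun h.symm i.rev
  simpa [sortDec, Fin.rev_rev] using this

lemma antitone_eigsDec (A : Matrix (Fin n) (Fin n) ℂ) : Antitone (eigsDec A) := by
  unfold eigsDec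
  split_ifs
  · exact antitone_sortDec _
  · exact antitone_const

lemma sortDec_eigsDec (A : Matrix (Fin n) (Fin n) ℂ) : sortDec (eigsDec A) = eigsDec A :=
  sortDec_of_antitone (antitone_eigsDec A)

/-- The permutation `τ` with `sortDec x = x ∘ τ`. -/
noncomputable def decPerm (x : Fin n → ℝ) : Equiv.Perm (Fin n) :=
  (Fin.revPerm : Equiv.Perm (Fin n)).trans (Tuple.sort x)

lemma sortDec_eq_comp (x : Fin n → ℝ) : sortDec x = x ∘ (decPerm x) := rfl

lemma card_filter_lt {k : ℕ} (hkn : k ≤ n) :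
    (Finset.univ.filter fun i : Fin n => (i : ℕ) < k).card = k := by
  have : (Finset.univ.filter fun i : Fin n => (i : ℕ) < k) =
      Finset.map (Fin.castLEEmb hkn) Finset.univ := by
    ext i
    simp only [Finset.mem_filter, Finset.mem_univ, true_and, Finset.mem_map,
      Fin.castLEEmb, Function.Embedding.coeFn_mk]
    constructor
    · intro h
      exact ⟨⟨(i : ℕ), h⟩, rfl⟩
    · rintro ⟨a, rfl⟩
      simpa using a.isLt
  rw [this, Finset.card_map, Finset.card_univ, Fintype.card_fin]

lemma sum_indicator_eq {k : ℕ} (hkn : k ≤ n) :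
    ∑ i : Fin n, (if (i : ℕ) < k then (1 : ℝ) else 0) = k := by
  rw [← Finset.sum_filter, Finset.sum_const, card_filter_lt hkn, nsmul_eq_mul, mul_one]

lemma sum_mul_le_psum_of_antitone {y c : Fin n → ℝ} (hy : Antitone y)
    (hc0 : ∀ i, 0 ≤ c i) (hc1 : ∀ i, c i ≤ 1) {k : ℕ}
    (hck : ∑ i, c i = k) (hkn : k ≤ n) :
    ∑ i, c i * y i ≤ psum k y := by
  rcases lt_or_eq_of_le hkn with hk | hk
  · set t := y ⟨k, hk⟩ with ht
    have hb : ∀ i ∈ Finset.univ, c i * y i - (if (i : ℕ) < k then y i else 0)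
        ≤ (c i - (if (i : ℕ) < k then 1 else 0)) * t := by
      intro i _
      by_cases hik : (i : ℕ) < k
      · simp only [if_pos hik]
        have hyi : t ≤ y i := hy (le_of_lt (Fin.lt_def.mpr hik))
        nlinarith [mul_nonneg (sub_nonneg.mpr (hc1 i)) (sub_nonneg.mpr hyi)]
      · simp only [if_neg hik]
        have hyi : y i ≤ t := hy (Fin.le_def.mpr (le_of_not_gt hik))
        nlinarith [mul_nonneg (hc0 i) (sub_nonneg.mpr hyi)]
    have hsum := Finset.sum_le_sum hb
    rw [Finset.sum_sub_distrib] at hsum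
    have h2 : ∑ i : Fin n, (c i - (if (i : ℕ) < k then (1:ℝ) else 0)) * t = 0 := by
      rw [← Finset.sum_mul, Finset.sum_sub_distrib, hck, sum_indicator_eq hkn,
        sub_self, zero_mul]
    rw [h2] at hsum
    rw [psum_eq]
    linarith
  · have hone : ∀ i, c i = 1 := by
      have hz : ∑ i : Fin n, (1 - c i) = 0 := by
        rw [Finset.sum_sub_distrib, hck, ← hk]
        simp
      intro i
      have := (Finset.sum_eq_zero_iff_of_nonneg
        (fun i _ => sub_nonneg.mpr (hc1 i))).mp hz i (Finset.mem_univ i)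
      linarith
    have hp : psum k y = ∑ i, y i := by
      rw [psum_eq]
      refine Finset.sum_congr rfl fun i _ => if_pos ?_
      exact hk ▸ i.isLt
    rw [hp]
    refine le_of_eq (Finset.sum_congr rfl fun i _ => ?_)
    rw [hone i, one_mul]

lemma sum_mul_le_psum {x c : Fin n → ℝ} (hc0 : ∀ i, 0 ≤ c i) (hc1 : ∀ i, c i ≤ 1)
    {k : ℕ} (hck : ∑ i, c i = k) (hkn : k ≤ n) :
    ∑ i, c i * x i ≤ psum k (sortDec x) := by
  have h1 : ∑ i, c i * x i = ∑ i, c (decPerm x i) * sortDec x i :=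
    (Equiv.sum_comp (decPerm x) (fun i => c i * x i)).symm
  rw [h1]
  exact sum_mul_le_psum_of_antitone (antitone_sortDec x) (fun i => hc0 _) (fun i => hc1 _)
    (by rw [Equiv.sum_comp (decPerm x) c]; exact hck) hkn

lemma psum_rev (z : Fin n → ℝ) {k : ℕ} (hkn : k ≤ n) :
    psum k (fun i => z i.rev) = (∑ i, z i) - psum (n - k) z := by
  rw [psum_eq, psum_eq]
  have h1 : ∑ i : Fin n, (if (i : ℕ) < k then z i.rev else 0)
      = ∑ i : Fin n, (if ((Fin.rev i : Fin n) : ℕ) < k then z i else 0) := by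
    rw [← Equiv.sum_comp (Fin.revPerm : Equiv.Perm (Fin n))
      (fun i => if ((Fin.rev i : Fin n) : ℕ) < k then z i else 0)]
    refine Finset.sum_congr rfl fun i _ => ?_
    simp [Fin.rev_rev]
  rw [h1]
  have h2 : ∀ i : Fin n, (if ((Fin.rev i : Fin n) : ℕ) < k then z i else 0)
      = z i - (if (i : ℕ) < n - k then z i else 0) := by
    intro i
    have hi := i.isLt
    have hrev : ((Fin.rev i : Fin n) : ℕ) = n - ((i : ℕ) + 1) := Fin.val_rev i
    by_cases hc : ((Fin.rev i : Fin n) : ℕ) < k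
    · rw [if_pos hc, if_neg (by omega), sub_zero]
    · rw [if_neg hc, if_pos (by omega), sub_self]
  rw [Finset.sum_congr rfl (fun i _ => h2 i), Finset.sum_sub_distrib]

lemma eigsDec_of_hermitian {A : Matrix (Fin n) (Fin n) ℂ} (hA : A.IsHermitian) :
    eigsDec A = sortDec hA.eigenvalues := by
  unfold eigsDec
  rw [dif_pos hA]

lemma diag_re_nonneg {M : Matrix (Fin n) (Fin n) ℂ} (hM : M.PosSemidef) (i : Fin n) :
    0 ≤ (M i i).re := by
  have h2 : (0 : ℂ) ≤ M i i := hM.diag_nonneg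
  exact (Complex.nonneg_iff.mp h2).1

lemma trace_mul_diag (M : Matrix (Fin n) (Fin n) ℂ) (d : Fin n → ℂ) :
    (M * Matrix.diagonal d).trace = ∑ i, M i i * d i := by
  simp [Matrix.trace, Matrix.diag, Matrix.mul_diagonal]

lemma re_trace_mul_le {A C : Matrix (Fin n) (Fin n) ℂ} (hA : A.IsHermitian)
    (hC : C.PosSemidef) (hC1 : (1 - C).PosSemidef) {k : ℕ}
    (hCk : C.trace = (k : ℂ)) (hkn : k ≤ n) :
    ((C * A).trace).re ≤ psum k (eigsDec A) := by
  set U : Matrix (Fin n) (Fin n) ℂ := (hA.eigenvectorUnitary : Matrix (Fin n) (Fin n) ℂ) with hUdef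
  have hU2 : U * star U = 1 := Matrix.mem_unitaryGroup_iff.mp hA.eigenvectorUnitary.2
  have hU1 : star U * U = 1 := Matrix.mem_unitaryGroup_iff'.mp hA.eigenvectorUnitary.2
  set M := star U * C * U with hMdef
  have hMps : M.PosSemidef := by
    have h := hC.mul_mul_conjTranspose_same (star U)
    rw [hMdef]
    simpa [Matrix.star_eq_conjTranspose] using h
  have hM1 : (1 - M).PosSemidef := by
    have h := hC1.mul_mul_conjTranspose_same (star U)
    have he : star U * (1 - C) * (star U)ᴴ = 1 - M := by
      rw [← Matrix.star_eq_conjTranspose, star_star, Matrix.mul_sub, Matrix.sub_mul,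
        Matrix.mul_one, hU1, hMdef]
    rwa [he] at h
  have htr : ∑ i, (M i i).re = (k : ℝ) := by
    have h1 : M.trace = C.trace := by
      rw [hMdef, Matrix.trace_mul_comm (star U * C) U, ← Matrix.mul_assoc, hU2, Matrix.one_mul]
    have h2 : M.trace = ∑ i, M i i := rfl
    have := congrArg Complex.re (h2 ▸ h1 : (∑ i, M i i) = C.trace)
    rwa [hCk, Complex.re_sum, Complex.natCast_re] at this
  have hc0 : ∀ i, 0 ≤ (M i i).re := diag_re_nonneg hMps
  have hc1 : ∀ i, (M i i).re ≤ 1 := by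
    intro i
    have h := diag_re_nonneg hM1 i
    have he : ((1 - M) i i).re = 1 - (M i i).re := by
      simp [Matrix.sub_apply, Matrix.one_apply_eq]
    rw [he] at h
    linarith
  have hexp : ((C * A).trace).re = ∑ i, (M i i).re * hA.eigenvalues i := by
    have hstep : (C * A).trace = ∑ i, M i i * (hA.eigenvalues i : ℂ) := by
      conv_lhs => rw [hA.spectral_theorem, Unitary.conjStarAlgAut_apply]
      have he1 : C * (U * Matrix.diagonal (RCLike.ofReal ∘ hA.eigenvalues) * star U)
          = (C * U) * Matrix.diagonal (RCLike.ofReal ∘ hA.eigenvalues) * star U := by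
        rw [Matrix.mul_assoc, Matrix.mul_assoc, Matrix.mul_assoc]
      rw [he1, Matrix.trace_mul_cycle, ← Matrix.mul_assoc, trace_mul_diag]
      rfl
    rw [hstep, Complex.re_sum]
    refine Finset.sum_congr rfl fun i _ => ?_
    simp [Complex.mul_re]
  rw [hexp]
  have hfin := sum_mul_le_psum (x := hA.eigenvalues) hc0 hc1 htr hkn
  rwa [← eigsDec_of_hermitian hA] at hfin

lemma sum_eigsDec {A : Matrix (Fin n) (Fin n) ℂ} (hA : A.IsHermitian) :
    ∑ i, eigsDec A i = (A.trace).re := by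
  rw [eigsDec_of_hermitian hA]
  have h1 : ∑ i, sortDec hA.eigenvalues i = ∑ i, hA.eigenvalues i :=
    Equiv.sum_comp (decPerm hA.eigenvalues) hA.eigenvalues
  have hU1 : star (hA.eigenvectorUnitary : Matrix (Fin n) (Fin n) ℂ)
      * (hA.eigenvectorUnitary : Matrix (Fin n) (Fin n) ℂ) = 1 :=
    Matrix.mem_unitaryGroup_iff'.mp hA.eigenvectorUnitary.2
  have h2 : A.trace = ∑ i, (hA.eigenvalues i : ℂ) := by
    conv_lhs => rw [hA.spectral_theorem, Unitary.conjStarAlgAut_apply]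
    rw [Matrix.trace_mul_cycle, hU1, Matrix.one_mul, Matrix.trace_diagonal]
    rfl
  rw [h2, Complex.re_sum, h1]
  simp

lemma sum_indicator_eq' {k : ℕ} (hkn : k ≤ n) :
    ∑ i : Fin n, (if (i : ℕ) < k then (1 : ℂ) else 0) = k := by
  rw [← Finset.sum_filter, Finset.sum_const, card_filter_lt hkn, nsmul_eq_mul, mul_one]

lemma trace_mul_spectral {A : Matrix (Fin n) (Fin n) ℂ} (hA : A.IsHermitian)
    (C : Matrix (Fin n) (Fin n) ℂ) :
    (C * A).trace = ∑ i, (star (hA.eigenvectorUnitary : Matrix (Fin n) (Fin n) ℂ) * C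
      * (hA.eigenvectorUnitary : Matrix (Fin n) (Fin n) ℂ)) i i * (hA.eigenvalues i : ℂ) := by
  set U : Matrix (Fin n) (Fin n) ℂ := (hA.eigenvectorUnitary : Matrix (Fin n) (Fin n) ℂ)
  conv_lhs => rw [hA.spectral_theorem, Unitary.conjStarAlgAut_apply]
  have he1 : C * (U * Matrix.diagonal (RCLike.ofReal ∘ hA.eigenvalues) * star U)
      = (C * U) * Matrix.diagonal (RCLike.ofReal ∘ hA.eigenvalues) * star U := by
    rw [Matrix.mul_assoc, Matrix.mul_assoc, Matrix.mul_assoc]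
  rw [he1, Matrix.trace_mul_cycle, ← Matrix.mul_assoc, trace_mul_diag]
  rfl

lemma exists_proj {A : Matrix (Fin n) (Fin n) ℂ} (hA : A.IsHermitian) {k : ℕ} (hkn : k ≤ n) :
    ∃ P : Matrix (Fin n) (Fin n) ℂ, P.PosSemidef ∧ (1 - P).PosSemidef ∧
      P.trace = (k : ℂ) ∧ ((P * A).trace).re = psum k (eigsDec A) := by
  set U : Matrix (Fin n) (Fin n) ℂ := (hA.eigenvectorUnitary : Matrix (Fin n) (Fin n) ℂ)
  have hU2 : U * star U = 1 := Matrix.mem_unitaryGroup_iff.mp hA.eigenvectorUnitary.2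
  have hU1 : star U * U = 1 := Matrix.mem_unitaryGroup_iff'.mp hA.eigenvectorUnitary.2
  set τ : Equiv.Perm (Fin n) := decPerm hA.eigenvalues with hτ
  set χ : Fin n → ℂ := fun i => if ((τ.symm i : Fin n) : ℕ) < k then 1 else 0 with hχ
  have hχ0 : (0 : Fin n → ℂ) ≤ χ := by
    intro i
    by_cases h : ((τ.symm i : Fin n) : ℕ) < k <;> simp [hχ, h]
  have hχ1 : ∀ i, χ i = 1 ∨ χ i = 0 := by
    intro i
    by_cases h : ((τ.symm i : Fin n) : ℕ) < k <;> simp [hχ, h]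
  refine ⟨U * Matrix.diagonal χ * star U, ?_, ?_, ?_, ?_⟩
  · have h := (Matrix.PosSemidef.diagonal hχ0).mul_mul_conjTranspose_same U
    simpa [Matrix.star_eq_conjTranspose] using h
  · have hd : Matrix.diagonal (fun i => (1 : ℂ) - χ i) = 1 - Matrix.diagonal χ := by
      rw [← Matrix.diagonal_one, Matrix.diagonal_sub]
    have key : (1 : Matrix (Fin n) (Fin n) ℂ) - U * Matrix.diagonal χ * star U
        = U * Matrix.diagonal (fun i => 1 - χ i) * star U := by
      rw [hd, Matrix.mul_sub, Matrix.sub_mul, Matrix.mul_one, hU2]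
    rw [key]
    have h0 : (0 : Fin n → ℂ) ≤ fun i => 1 - χ i := by
      intro i
      rcases hχ1 i with h | h <;> simp [h]
    have h := (Matrix.PosSemidef.diagonal h0).mul_mul_conjTranspose_same U
    simpa [Matrix.star_eq_conjTranspose] using h
  · rw [Matrix.trace_mul_cycle, hU1, Matrix.one_mul, Matrix.trace_diagonal]
    have := Equiv.sum_comp τ χ
    rw [← this]
    have heq : ∀ i : Fin n, χ (τ i) = (if (i : ℕ) < k then (1 : ℂ) else 0) := by
      intro i
      simp [hχ, Equiv.symm_apply_apply]
    rw [Finset.sum_congr rfl (fun i _ => heq i)]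
    exact sum_indicator_eq' hkn
  · rw [trace_mul_spectral hA]
    have hconj : star U * (U * Matrix.diagonal χ * star U) * U = Matrix.diagonal χ := by
      rw [← Matrix.mul_assoc, ← Matrix.mul_assoc, hU1, Matrix.one_mul, Matrix.mul_assoc,
        hU1, Matrix.mul_one]
    rw [hconj, Complex.re_sum]
    have heq : ∀ i : Fin n, ((Matrix.diagonal χ) i i * (hA.eigenvalues i : ℂ)).re
        = (if ((τ.symm i : Fin n) : ℕ) < k then hA.eigenvalues i else 0) := by
      intro i
      rw [Matrix.diagonal_apply_eq]
      by_cases h : ((τ.symm i : Fin n) : ℕ) < k <;> simp [hχ, h]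
    rw [Finset.sum_congr rfl (fun i _ => heq i), ← Equiv.sum_comp τ
      (fun i => if ((τ.symm i : Fin n) : ℕ) < k then hA.eigenvalues i else 0)]
    have heq2 : ∀ i : Fin n, (if ((τ.symm (τ i) : Fin n) : ℕ) < k
        then hA.eigenvalues (τ i) else 0)
        = (if (i : ℕ) < k then (hA.eigenvalues ∘ τ) i else 0) := by
      intro i
      simp [Equiv.symm_apply_apply]
    rw [Finset.sum_congr rfl (fun i _ => heq2 i), ← psum_eq, eigsDec_of_hermitian hA,
      sortDec_eq_comp]

lemma majorizes_of {x y : Fin n → ℝ} (hx : sortDec x = x) (hy : sortDec y = y)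
    (h : ∀ k, k ≤ n → psum k x ≤ psum k y) (hs : ∑ i, x i = ∑ i, y i) :
    Majorizes x y := by
  refine ⟨fun k => ?_, hs⟩
  rcases le_or_gt k n with hk | hk
  · rw [hx, hy]
    exact h k hk
  · have hfilter : (Finset.univ.filter fun i : Fin n => (i : ℕ) < k) = Finset.univ := by
      ext i
      simp [i.isLt.trans hk]
    rw [hfilter, hx, hy]
    exact le_of_eq hs

lemma majorizes_unitary {A V : Matrix (Fin n) (Fin n) ℂ} (hA : A.IsHermitian)
    (hV : V ∈ Matrix.unitaryGroup (Fin n) ℂ) :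
    Majorizes (eigsDec (V * A * Vᴴ)) (eigsDec A) := by
  have hV1 : Vᴴ * V = 1 := by
    have := Matrix.mem_unitaryGroup_iff'.mp hV
    rwa [Matrix.star_eq_conjTranspose] at this
  have hV2 : V * Vᴴ = 1 := by
    have := Matrix.mem_unitaryGroup_iff.mp hV
    rwa [Matrix.star_eq_conjTranspose] at this
  have hA' : (V * A * Vᴴ).IsHermitian := Matrix.isHermitian_mul_mul_conjTranspose V hA
  apply majorizes_of (sortDec_eigsDec _) (sortDec_eigsDec _)
  · intro k hk
    obtain ⟨P, hP, hP1, hPk, hPA⟩ := exists_proj hA' hk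
    rw [← hPA]
    have he : (P * (V * A * Vᴴ)).trace = ((Vᴴ * P * V) * A).trace := by
      have h1 : P * (V * A * Vᴴ) = (P * V) * A * Vᴴ := by
        rw [Matrix.mul_assoc, Matrix.mul_assoc, Matrix.mul_assoc]
      rw [h1, Matrix.trace_mul_cycle, ← Matrix.mul_assoc]
    rw [he]
    refine re_trace_mul_le hA (by simpa using hP.conjTranspose_mul_mul_same V) ?_ ?_ hk
    · have key : (1 : Matrix (Fin n) (Fin n) ℂ) - Vᴴ * P * V = Vᴴ * (1 - P) * V := by
        rw [Matrix.mul_sub, Matrix.sub_mul, Matrix.mul_one, hV1]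
      rw [key]
      simpa using hP1.conjTranspose_mul_mul_same V
    · rw [Matrix.trace_mul_cycle, hV2, Matrix.one_mul, hPk]
  · rw [sum_eigsDec hA', sum_eigsDec hA]
    congr 1
    rw [Matrix.trace_mul_cycle, hV1, Matrix.one_mul]

lemma posSemidef_sum {r : ℕ} (G : Fin r → Matrix (Fin n) (Fin n) ℂ)
    (hG : ∀ j, (G j).PosSemidef) : (∑ j, G j).PosSemidef :=
  Finset.sum_induction G Matrix.PosSemidef (fun _ _ ha hb => ha.add hb)
    Matrix.PosSemidef.zero (fun j _ => hG j)

lemma conj_diag_perm {A : Matrix (Fin n) (Fin n) ℂ} (hA : A.IsHermitian)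
    (σ : Equiv.Perm (Fin n)) :
    ∃ U ∈ Matrix.unitaryGroup (Fin n) ℂ,
      A = U * Matrix.diagonal (fun i => (hA.eigenvalues (σ i) : ℂ)) * Uᴴ := by
  set V : Matrix (Fin n) (Fin n) ℂ := (hA.eigenvectorUnitary : Matrix (Fin n) (Fin n) ℂ)
  have hV2 : V * Vᴴ = 1 := by
    have := Matrix.mem_unitaryGroup_iff.mp hA.eigenvectorUnitary.2
    rwa [Matrix.star_eq_conjTranspose] at this
  refine ⟨V.submatrix id σ, ?_, ?_⟩
  · rw [Matrix.mem_unitaryGroup_iff, Matrix.star_eq_conjTranspose,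
      Matrix.conjTranspose_submatrix, Matrix.submatrix_mul_equiv,
      Matrix.submatrix_id_id, hV2]
  · have hdiag : Matrix.diagonal (fun i => (hA.eigenvalues (σ i) : ℂ))
        = (Matrix.diagonal (RCLike.ofReal ∘ hA.eigenvalues)).submatrix σ σ := by
      rw [Matrix.submatrix_diagonal_equiv]
      rfl
    rw [hdiag, Matrix.conjTranspose_submatrix, Matrix.submatrix_mul_equiv,
      Matrix.submatrix_mul_equiv, Matrix.submatrix_id_id]
    have := hA.spectral_theorem
    rw [Unitary.conjStarAlgAut_apply] at this
    rwa [Matrix.star_eq_conjTranspose] at this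

end Aux

/-- For density matrices `ρ1, ρ2` and a Schur-convex `d`, the maximum of
`d(λ(ρ1 - Φ(ρ2)))` over unital channels `Φ` (equivalently over mixed unitary channels) equals
`d(λ(Λ↓(ρ1) - Λ↑(ρ2)))`, and is attained by a mixed unitary (in particular unital) channel. -/
theorem stmt_3 {n : ℕ} (ρ1 ρ2 : Matrix (Fin n) (Fin n) ℂ)
    (h1 : IsDensityMatrix ρ1) (h2 : IsDensityMatrix ρ2)
    (d : (Fin n → ℝ) → ℝ) (hd : SchurConvex d) :
    (∀ Φ, IsUnitalChannel Φ →
        d (eigsDec (ρ1 - Φ ρ2)) ≤ d (eigsDec (LambdaDown ρ1 - LambdaUp ρ2))) ∧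
      ∃ Φ, IsMixedUnitaryChannel Φ ∧ IsUnitalChannel Φ ∧
        d (eigsDec (ρ1 - Φ ρ2)) = d (eigsDec (LambdaDown ρ1 - LambdaUp ρ2)) := by
  obtain ⟨h1p, h1t⟩ := h1
  obtain ⟨h2p, h2t⟩ := h2
  have h1h : ρ1.IsHermitian := h1p.1
  have h2h : ρ2.IsHermitian := h2p.1
  set w : Fin n → ℝ := fun i => eigsDec ρ1 i - eigsInc ρ2 i with hw
  set D : Matrix (Fin n) (Fin n) ℂ := LambdaDown ρ1 - LambdaUp ρ2 with hD
  have hDdiag : D = Matrix.diagonal (fun i => ((w i : ℝ) : ℂ)) := by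
    rw [hD, LambdaDown, LambdaUp, Matrix.diagonal_sub]
    congr 1
    funext i
    push_cast [hw]
    ring
  have hDh : D.IsHermitian := by
    rw [hDdiag]
    refine Matrix.isHermitian_diagonal_of_self_adjoint _ (funext fun i => ?_)
    exact Complex.conj_ofReal _
  have hsum2 : ∑ i, eigsDec ρ2 i = 1 := by
    rw [sum_eigsDec h2h, h2t]
    simp
  have hsumInc2 : ∑ i, eigsInc ρ2 i = 1 := by
    rw [← hsum2, ← Equiv.sum_comp (Fin.revPerm : Equiv.Perm (Fin n)) (eigsDec ρ2)]
    rfl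
  have hsum1 : ∑ i, eigsDec ρ1 i = 1 := by
    rw [sum_eigsDec h1h, h1t]
    simp
  have hDtrace : ∑ i, eigsDec D i = 0 := by
    rw [sum_eigsDec hDh, hDdiag, Matrix.trace_diagonal]
    have : (∑ i, ((w i : ℝ) : ℂ)) = ((∑ i, w i : ℝ) : ℂ) := by push_cast; rfl
    rw [this, Complex.ofReal_re, hw]
    rw [Finset.sum_sub_distrib, hsum1, hsumInc2, sub_self]
  -- the key majorization for an arbitrary unital channel
  have key : ∀ Φ, IsUnitalChannel Φ → Majorizes (eigsDec (ρ1 - Φ ρ2)) (eigsDec D) := by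
    rintro Φ ⟨⟨r, F, hF, hrep⟩, hone⟩
    have hFu : (∑ j, F j * (F j)ᴴ) = 1 := by
      have h := hrep 1
      rw [hone] at h
      simpa [Matrix.mul_one] using h.symm
    have hΦρ2 : Φ ρ2 = ∑ j, F j * ρ2 * (F j)ᴴ := hrep ρ2
    have hΦh : (Φ ρ2).IsHermitian := by
      rw [hΦρ2]
      unfold Matrix.IsHermitian
      rw [Matrix.conjTranspose_sum]
      refine Finset.sum_congr rfl fun j _ => ?_
      rw [Matrix.conjTranspose_mul, Matrix.conjTranspose_mul,
        Matrix.conjTranspose_conjTranspose, h2h.eq, Matrix.mul_assoc]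
    have hXh : (ρ1 - Φ ρ2).IsHermitian := h1h.sub hΦh
    have htrΦ : (Φ ρ2).trace = 1 := by
      rw [hΦρ2, Matrix.trace_sum]
      have hj : ∀ j, (F j * ρ2 * (F j)ᴴ).trace = ((F j)ᴴ * F j * ρ2).trace := by
        intro j
        rw [Matrix.trace_mul_cycle]
      rw [Finset.sum_congr rfl (fun j _ => hj j), ← Matrix.trace_sum, ← Finset.sum_mul, hF,
        Matrix.one_mul, h2t]
    apply majorizes_of (sortDec_eigsDec _) (sortDec_eigsDec _)
    · intro k hk
      obtain ⟨P, hP, hP1, hPk, hPA⟩ := exists_proj hXh hk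
      set Cs : Matrix (Fin n) (Fin n) ℂ := ∑ j, (F j)ᴴ * P * F j with hCs
      have hCsPS : Cs.PosSemidef :=
        posSemidef_sum _ (fun j => hP.conjTranspose_mul_mul_same (F j))
      have hCs1 : (1 - Cs).PosSemidef := by
        have he : (1 : Matrix (Fin n) (Fin n) ℂ) - Cs = ∑ j, (F j)ᴴ * (1 - P) * F j := by
          have hj : ∀ j, (F j)ᴴ * (1 - P) * F j = (F j)ᴴ * F j - (F j)ᴴ * P * F j := by
            intro j
            rw [Matrix.mul_sub, Matrix.mul_one, Matrix.sub_mul]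
          rw [Finset.sum_congr rfl (fun j _ => hj j), Finset.sum_sub_distrib, hF]
        rw [he]
        exact posSemidef_sum _ (fun j => hP1.conjTranspose_mul_mul_same (F j))
      have hCstr : Cs.trace = (k : ℂ) := by
        rw [hCs, Matrix.trace_sum]
        have hj : ∀ j, ((F j)ᴴ * P * F j).trace = (P * (F j * (F j)ᴴ)).trace := by
          intro j
          rw [Matrix.trace_mul_cycle]
          exact Matrix.trace_mul_comm _ _
        rw [Finset.sum_congr rfl (fun j _ => hj j), ← Matrix.trace_sum, ← Finset.mul_sum, hFu,
          Matrix.mul_one, hPk]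
      have hCsB : (Cs * ρ2).trace = (P * Φ ρ2).trace := by
        rw [hCs, hΦρ2, Finset.sum_mul, Matrix.mul_sum, Matrix.trace_sum, Matrix.trace_sum]
        refine Finset.sum_congr rfl fun j _ => ?_
        have h := Matrix.trace_mul_comm ((F j)ᴴ) (P * F j * ρ2)
        simp only [Matrix.mul_assoc] at h ⊢
        exact h
      -- upper bound for trace against ρ1
      have hbound1 : ((P * ρ1).trace).re ≤ psum k (eigsDec ρ1) :=
        re_trace_mul_le h1h hP hP1 hPk hk
      -- lower bound for trace against Φ ρ2
      have hnk : n - k ≤ n := Nat.sub_le n k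
      have htr1Cs : (1 - Cs).trace = ((n - k : ℕ) : ℂ) := by
        rw [Matrix.trace_sub, Matrix.trace_one, hCstr, Nat.cast_sub hk]
        simp
      have hbound2 : (((1 - Cs) * ρ2).trace).re ≤ psum (n - k) (eigsDec ρ2) := by
        refine re_trace_mul_le h2h hCs1 ?_ htr1Cs hnk
        rwa [sub_sub_cancel]
      have hexpand : (((1 - Cs) * ρ2).trace).re = 1 - ((P * Φ ρ2).trace).re := by
        rw [Matrix.sub_mul, Matrix.one_mul, Matrix.trace_sub, hCsB]
        rw [Complex.sub_re, h2t]
        simp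
      -- lower bound for the RHS
      set χ0 : Fin n → ℂ := fun i => if (i : ℕ) < k then 1 else 0 with hχ0
      set C0 : Matrix (Fin n) (Fin n) ℂ := Matrix.diagonal χ0 with hC0def
      have hC0 : C0.PosSemidef := by
        refine Matrix.PosSemidef.diagonal fun i => ?_
        by_cases h : (i : ℕ) < k <;> simp [hχ0, h]
      have hC01 : (1 - C0).PosSemidef := by
        have hd : (1 : Matrix (Fin n) (Fin n) ℂ) - C0
            = Matrix.diagonal (fun i => 1 - χ0 i) := by
          rw [hC0def, ← Matrix.diagonal_one, Matrix.diagonal_sub]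
        rw [hd]
        refine Matrix.PosSemidef.diagonal fun i => ?_
        by_cases h : (i : ℕ) < k <;> simp [hχ0, h]
      have hC0tr : C0.trace = (k : ℂ) := by
        rw [hC0def, Matrix.trace_diagonal]
        exact sum_indicator_eq' hk
      have hRHS : ((C0 * D).trace).re ≤ psum k (eigsDec D) :=
        re_trace_mul_le hDh hC0 hC01 hC0tr hk
      have hC0D : ((C0 * D).trace).re = psum k w := by
        rw [hDdiag, hC0def, Matrix.diagonal_mul_diagonal, Matrix.trace_diagonal,
          Complex.re_sum, psum_eq]
        refine Finset.sum_congr rfl fun i _ => ?_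
        by_cases h : (i : ℕ) < k <;> simp [hχ0, h]
      have hpw : psum k w = psum k (eigsDec ρ1) - psum k (eigsInc ρ2) := by
        rw [psum_eq, psum_eq, psum_eq, ← Finset.sum_sub_distrib]
        refine Finset.sum_congr rfl fun i _ => ?_
        by_cases h : (i : ℕ) < k <;> simp [hw, h]
      have hrev : psum k (eigsInc ρ2) = 1 - psum (n - k) (eigsDec ρ2) := by
        have := psum_rev (eigsDec ρ2) hk
        rw [hsum2] at this
        exact this
      -- put everything together
      have hLHS : psum k (eigsDec (ρ1 - Φ ρ2)) = ((P * ρ1).trace).re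
          - ((P * Φ ρ2).trace).re := by
        rw [← hPA, Matrix.mul_sub, Matrix.trace_sub, Complex.sub_re]
      rw [hLHS]
      have h2' : 1 - psum (n - k) (eigsDec ρ2) ≤ ((P * Φ ρ2).trace).re := by
        rw [hexpand] at hbound2
        linarith
      rw [hC0D, hpw, hrev] at hRHS
      linarith
    · rw [sum_eigsDec hXh, hDtrace]
      rw [Matrix.trace_sub, h1t, htrΦ, sub_self]
      simp
  refine ⟨fun Φ hΦ => hd _ _ (key Φ hΦ), ?_⟩
  -- construction of the optimal mixed unitary channel
  obtain ⟨U₁, hU₁mem, hU₁⟩ := conj_diag_perm h1h (decPerm h1h.eigenvalues)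
  obtain ⟨U₂, hU₂mem, hU₂⟩ := conj_diag_perm h2h (Tuple.sort h2h.eigenvalues)
  have hU₁eq : ρ1 = U₁ * LambdaDown ρ1 * U₁ᴴ := by
    have he : (fun i => (h1h.eigenvalues ((decPerm h1h.eigenvalues) i) : ℂ))
        = fun i => ((eigsDec ρ1 i : ℝ) : ℂ) := by
      funext i
      rw [eigsDec_of_hermitian h1h, sortDec_eq_comp]
      rfl
    rw [LambdaDown, ← he]
    exact hU₁
  have hU₂eq : ρ2 = U₂ * LambdaUp ρ2 * U₂ᴴ := by
    have he : (fun i => (h2h.eigenvalues ((Tuple.sort h2h.eigenvalues) i) : ℂ))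
        = fun i => ((eigsInc ρ2 i : ℝ) : ℂ) := by
      funext i
      rw [show eigsInc ρ2 i = eigsDec ρ2 i.rev from rfl, eigsDec_of_hermitian h2h]
      unfold sortDec
      rw [Fin.rev_rev]
    rw [LambdaUp, ← he]
    exact hU₂
  have hU₁1 : U₁ᴴ * U₁ = 1 := by
    have := Matrix.mem_unitaryGroup_iff'.mp hU₁mem
    rwa [Matrix.star_eq_conjTranspose] at this
  have hU₁2 : U₁ * U₁ᴴ = 1 := by
    have := Matrix.mem_unitaryGroup_iff.mp hU₁mem
    rwa [Matrix.star_eq_conjTranspose] at this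
  have hU₂1 : U₂ᴴ * U₂ = 1 := by
    have := Matrix.mem_unitaryGroup_iff'.mp hU₂mem
    rwa [Matrix.star_eq_conjTranspose] at this
  have hU₂2 : U₂ * U₂ᴴ = 1 := by
    have := Matrix.mem_unitaryGroup_iff.mp hU₂mem
    rwa [Matrix.star_eq_conjTranspose] at this
  set Vm : Matrix (Fin n) (Fin n) ℂ := U₁ * U₂ᴴ with hVm
  have hVmmem : Vm ∈ Matrix.unitaryGroup (Fin n) ℂ := by
    refine mul_mem hU₁mem ?_
    have := Unitary.star_mem hU₂mem
    rwa [Matrix.star_eq_conjTranspose] at this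
  have hVm1 : Vmᴴ * Vm = 1 := by
    have := Matrix.mem_unitaryGroup_iff'.mp hVmmem
    rwa [Matrix.star_eq_conjTranspose] at this
  have hVm2 : Vm * Vmᴴ = 1 := by
    have := Matrix.mem_unitaryGroup_iff.mp hVmmem
    rwa [Matrix.star_eq_conjTranspose] at this
  refine ⟨fun X => Vm * X * Vmᴴ, ?_, ?_, ?_⟩
  · exact ⟨1, fun _ => (1 : ℝ), fun _ => Vm, fun _ => zero_le_one, by simp,
      fun _ => hVmmem, fun X => by simp⟩
  · refine ⟨⟨1, fun _ => Vm, by simp [hVm1], fun X => by simp⟩, ?_⟩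
    simp [hVm2]
  · have hΦρ2 : Vm * ρ2 * Vmᴴ = U₁ * LambdaUp ρ2 * U₁ᴴ := by
      conv_lhs => rw [hU₂eq]
      rw [hVm, Matrix.conjTranspose_mul, Matrix.conjTranspose_conjTranspose]
      calc U₁ * U₂ᴴ * (U₂ * LambdaUp ρ2 * U₂ᴴ) * (U₂ * U₁ᴴ)
          = U₁ * ((U₂ᴴ * U₂) * LambdaUp ρ2 * (U₂ᴴ * U₂)) * U₁ᴴ := by
            simp only [Matrix.mul_assoc]
        _ = U₁ * LambdaUp ρ2 * U₁ᴴ := by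
            rw [hU₂1, Matrix.one_mul, Matrix.mul_one, Matrix.mul_assoc]
    have hX : ρ1 - Vm * ρ2 * Vmᴴ = U₁ * D * U₁ᴴ := by
      rw [hΦρ2, hD]
      conv_lhs => rw [hU₁eq]
      rw [Matrix.mul_sub, Matrix.sub_mul]
    have hconjh : (U₁ * D * U₁ᴴ).IsHermitian :=
      Matrix.isHermitian_mul_mul_conjTranspose U₁ hDh
    have maj1 : Majorizes (eigsDec (U₁ * D * U₁ᴴ)) (eigsDec D) :=
      majorizes_unitary hDh hU₁mem
    have maj2 : Majorizes (eigsDec D) (eigsDec (U₁ * D * U₁ᴴ)) := by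
      have hmem' : U₁ᴴ ∈ Matrix.unitaryGroup (Fin n) ℂ := by
        have := Unitary.star_mem hU₁mem
        rwa [Matrix.star_eq_conjTranspose] at this
      have h := majorizes_unitary hconjh hmem'
      have hDeq : U₁ᴴ * (U₁ * D * U₁ᴴ) * (U₁ᴴ)ᴴ = D := by
        rw [Matrix.conjTranspose_conjTranspose]
        calc U₁ᴴ * (U₁ * D * U₁ᴴ) * U₁
            = (U₁ᴴ * U₁) * D * (U₁ᴴ * U₁) := by simp only [Matrix.mul_assoc]
          _ = D := by rw [hU₁1, Matrix.one_mul, Matrix.mul_one]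
      rwa [hDeq] at h
    rw [hX]
    exact le_antisymm (hd _ _ maj1) (hd _ _ maj2)
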